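/- Let G be a finite group, p a prime, and g ∈ G an element of order p^k with p^k maximal among p-power orders of elements of G. Then for every 1 ≤ n ≤ k, the element g^{p^{n-1}} is not a p^n-th power in G, but is an m-th power in G for every 1 ≤ m < p^n. -/

import Mathlib

theorem stmt_6 (G : Type*) [Group G] [Finite G] (p : ℕ) (hp : p.Prime)
    (g : G) (k : ℕ) (hg : orderOf g = p ^ k)
    (hmax : ∀ (h : G) (j : ℕ), orderOf h = p ^ j → j ≤ k) :
    ∀ n : ℕ, 1 ≤ n → n ≤ k →
      (¬ ∃ h : G, h ^ (p ^ n) = g ^ (p ^ (n - 1))) ∧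
      ∀ m : ℕ, 1 ≤ m → m < p ^ n → ∃ h : G, h ^ m = g ^ (p ^ (n - 1)) := by
  intro n hn1 hnk
  have hp1 : 1 < p := hp.one_lt
  constructor
  · rintro ⟨h, hh⟩
    have hord : orderOf (g ^ (p ^ (n - 1))) = p ^ (k - (n - 1)) := by
      rw [orderOf_pow, hg, Nat.gcd_eq_right (pow_dvd_pow p (by omega)),
        Nat.pow_div (by omega) (by omega)]
    rw [← hh, orderOf_pow] at hord
    set c := orderOf h with hc
    have hgd : c.gcd (p ^ n) ∣ p ^ n := Nat.gcd_dvd_right _ _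
    obtain ⟨e, hen, he⟩ := (Nat.dvd_prime_pow hp).mp hgd
    have hcval : c = p ^ (e + (k - (n - 1))) := by
      rw [pow_add, ← he, ← hord, Nat.mul_div_cancel' (Nat.gcd_dvd_left _ _)]
    have hle := hmax h _ hcval
    have he1 : e + 1 ≤ n := by omega
    have hdvd1 : p ^ (e + 1) ∣ c := by
      rw [hcval]; exact pow_dvd_pow p (by omega)
    have hdvd2 : p ^ (e + 1) ∣ p ^ n := pow_dvd_pow p he1
    have : p ^ (e + 1) ∣ p ^ e := he ▸ Nat.dvd_gcd hdvd1 hdvd2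
    have := (Nat.pow_dvd_pow_iff_le_right hp1).mp this
    omega
  · intro m hm1 hmn
    have hm0 : m ≠ 0 := by omega
    set a := m.factorization p with ha
    obtain ⟨t, ht⟩ := Nat.ordProj_dvd m p
    have htp : Nat.Coprime p t := by
      have h2 : t = m / p ^ a := by
        rw [ht, Nat.mul_div_cancel_left _ (by positivity)]
      rw [h2]; exact Nat.coprime_ordCompl hp hm0
    have htc : t.Coprime (p ^ k) := Nat.Coprime.pow_right k htp.symm
    have ha_lt : a < n := by
      by_contra hcon
      push_neg at hcon
      have h1 : p ^ n ≤ p ^ a := Nat.pow_le_pow_right (by omega) hcon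
      have h2 : p ^ a ≤ m := Nat.le_of_dvd (by omega) (Nat.ordProj_dvd m p)
      omega
    obtain ⟨s, -, hs⟩ := Nat.exists_mul_mod_eq_one_of_coprime htc
      (by have := Nat.one_lt_pow (n := k) (by omega) hp1; omega)
    refine ⟨g ^ (p ^ (n - 1 - a) * s), ?_⟩
    rw [← pow_mul, pow_eq_pow_iff_modEq, hg]
    calc p ^ (n - 1 - a) * s * m = p ^ (n - 1) * (t * s) := by
          rw [ht, show p ^ (n-1-a) * s * (p ^ m.factorization p * t)
            = (p ^ (n-1-a) * p ^ m.factorization p) * (t * s) by ring, ← pow_add]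
          congr 3
          omega
      _ ≡ p ^ (n - 1) * 1 [MOD p ^ k] := Nat.ModEq.mul_left _ (by
          unfold Nat.ModEq
          rw [hs, Nat.one_mod_eq_one.mpr (by nlinarith [Nat.one_lt_pow (n := k) (by omega) hp1])])
      _ = p ^ (n - 1) := by ring
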